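/- arXiv:1604.03024 — 6 statements merged into one kernel-verified Lean document; each statement's English description precedes it below -/
import Mathlib

section
/- Let H be a self-adjoint operator on a real Hilbert space X with exactly one negative eigenvalue: H η₀ = -σ² η₀ with σ > 0, ‖η₀‖ = 1, and H restricted to the orthogonal complement of η₀ is nonnegative. Assume moreover that H ≥ δ₀·Id on the orthogonal complement of span{η₀} ∪ Ker(H) for some δ₀ > 0, and that there exists ξ₀ ≠ 0 with ξ₀ ⊥ Ker(H) and ⟨H⁻¹ ξ₀, ξ₀⟩ < 0 (where H⁻¹ ξ₀ denotes any solution w of H w = ξ₀). Then ⟨H z, z⟩ ≥ 0 for every z ∈ D(H) with z ⊥ ξ₀. -/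
open scoped RealInnerProductSpace

/-- Positivity of a self-adjoint operator with one negative eigenvalue on the
orthogonal complement of a vector `ξ₀` with `⟪H⁻¹ ξ₀, ξ₀⟫ < 0`. -/
theorem stmt0
    {X : Type*} [NormedAddCommGroup X] [InnerProductSpace ℝ X] [CompleteSpace X]
    (H : X →ₗ[ℝ] X) (hsym : ∀ x y : X, ⟪H x, y⟫ = ⟪x, H y⟫)
    (σ : ℝ) (hσ : 0 < σ) (η₀ : X) (hη₀ : ‖η₀‖ = 1)
    (heig : H η₀ = -(σ ^ 2) • η₀)
    (hpos : ∀ z : X, ⟪z, η₀⟫ = 0 → 0 ≤ ⟪H z, z⟫)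
    (δ₀ : ℝ) (hδ₀ : 0 < δ₀)
    (hgap : ∀ z : X, ⟪z, η₀⟫ = 0 → (∀ w : X, H w = 0 → ⟪z, w⟫ = 0) →
      δ₀ * ‖z‖ ^ 2 ≤ ⟪H z, z⟫)
    (ξ₀ : X) (hξ₀ : ξ₀ ≠ 0)
    (hker : ∀ w : X, H w = 0 → ⟪ξ₀, w⟫ = 0)
    (hneg : ∀ w : X, H w = ξ₀ → ⟪w, ξ₀⟫ < 0)
    (hsol : ∃ w : X, H w = ξ₀) :
    ∀ z : X, ⟪z, ξ₀⟫ = 0 → 0 ≤ ⟪H z, z⟫ := by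
  obtain ⟨w, hw⟩ := hsol
  have hww : ⟪H w, w⟫ < 0 := by
    rw [hw, real_inner_comm]; exact hneg w hw
  intro z hz
  by_contra hzz
  push_neg at hzz
  have hcross : ⟪H z, w⟫ = 0 := by rw [hsym z w, hw]; exact hz
  set α : ℝ := ⟪w, η₀⟫ with hα
  set β : ℝ := -⟪z, η₀⟫ with hβ
  by_cases hαβ : α = 0 ∧ β = 0
  · have : (0:ℝ) ≤ ⟪H w, w⟫ := hpos w hαβ.1
    linarith
  · have hv : ⟪α • z + β • w, η₀⟫ = 0 := by
      rw [inner_add_left, real_inner_smul_left, real_inner_smul_left]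
      simp [hα, hβ]; ring
    have hq := hpos _ hv
    have hHv : H (α • z + β • w) = α • H z + β • H w := by
      simp [map_add, map_smul]
    rw [hHv] at hq
    have hcross' : ⟪H w, z⟫ = 0 := by
      rw [real_inner_comm, ← hsym z w]; exact hcross
    rw [inner_add_left, inner_add_right, inner_add_right,
      real_inner_smul_left, real_inner_smul_left, real_inner_smul_left,
      real_inner_smul_left, real_inner_smul_right, real_inner_smul_right,
      real_inner_smul_right, real_inner_smul_right, hcross, hcross'] at hq
    rcases not_and_or.mp hαβ with h | h
    · nlinarith [sq_nonneg α, sq_nonneg β, mul_pos (mul_self_pos.mpr h) (neg_pos.mpr hzz)]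
    · nlinarith [sq_nonneg α, mul_pos (mul_self_pos.mpr h) (neg_pos.mpr hww)]
end

section
/- Suppose Φ : ℝ → ℝ is twice differentiable and satisfies c² Φ'' = Φ(Φ − c) for a constant c ≠ 0. Define Ψ with Ψ' = Φ, the change of variables Ξ(η) = η − Ψ(η)/c, and suppose Ξ is a diffeomorphism onto its image with 1 − Φ(η)/c > 0. Then the function φ defined by φ(Ξ(η)) = Φ(η) satisfies the traveling-wave profile equation ((φ − c) φ_ξ)_ξ = φ on the image of Ξ. -/
open Topology


/-- The change of variables `ξ = Ξ(η) = η - Ψ(η)/c` transforms a solution `Φ` of the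
Schrödinger-type profile equation `c²Φ'' = Φ(Φ - c)` into a solution `φ` of the
Ostrovsky traveling-wave equation `((φ - c)φ_ξ)_ξ = φ` on the image of `Ξ`. -/
theorem stmt3
    (c : ℝ) (hc : c ≠ 0) (Φ Ψ φ : ℝ → ℝ)
    (hΦ : Differentiable ℝ Φ) (hΦ' : Differentiable ℝ (deriv Φ))
    (hprofile : ∀ η : ℝ, c ^ 2 * deriv (deriv Φ) η = Φ η * (Φ η - c))
    (hΨ : Differentiable ℝ Ψ) (hΨ' : ∀ η : ℝ, deriv Ψ η = Φ η)
    (Ξ : ℝ → ℝ) (hΞ : ∀ η : ℝ, Ξ η = η - Ψ η / c)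
    (hmono : ∀ η : ℝ, 1 - Φ η / c > 0)
    (hφ : ∀ η : ℝ, φ (Ξ η) = Φ η) :
    ∀ ξ ∈ Set.range Ξ, deriv (fun s => (φ s - c) * deriv φ s) ξ = φ ξ := by
  -- basic facts
  have hne : ∀ η : ℝ, (1 : ℝ) - Φ η / c ≠ 0 := fun η => ne_of_gt (hmono η)
  have hcΦ : ∀ η : ℝ, c - Φ η ≠ 0 := by
    intro η h
    have h1 : Φ η = c := by linarith [sub_eq_zero.mp h]
    have := hmono η
    rw [h1, div_self hc] at this
    linarith
  have hΨd : ∀ η : ℝ, HasDerivAt Ψ (Φ η) η := fun η => by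
    simpa [hΨ' η] using (hΨ η).hasDerivAt
  have hΞd : ∀ η : ℝ, HasDerivAt Ξ (1 - Φ η / c) η := by
    intro η
    have : HasDerivAt (fun η => η - Ψ η / c) (1 - Φ η / c) η :=
      (hasDerivAt_id η).sub ((hΨd η).div_const c)
    exact this.congr_of_eventuallyEq (Filter.Eventually.of_forall fun x => hΞ x)
  have hΞs : ∀ η : ℝ, HasStrictDerivAt Ξ (1 - Φ η / c) η := fun η =>
    hasStrictDerivAt_of_hasDerivAt_of_continuousAt
      (Filter.Eventually.of_forall hΞd)
      (((continuous_const.sub (hΦ.continuous.div_const c))).continuousAt)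
  -- Claim A : derivative of φ at points of the range
  have claimA : ∀ η : ℝ, HasDerivAt φ (deriv Φ η * (1 - Φ η / c)⁻¹) (Ξ η) := by
    intro η
    set g := (hΞs η).localInverse Ξ _ η (hne η) with hg
    have hfd : HasStrictFDerivAt Ξ
        ((ContinuousLinearEquiv.unitsEquivAut ℝ (Units.mk0 _ (hne η))).toContinuousLinearEquiv
          : ℝ →L[ℝ] ℝ) η := (hΞs η).hasStrictFDerivAt_equiv (hne η)
    have hga : g (Ξ η) = η := hfd.localInverse_apply_image
    have hright : ∀ᶠ y in 𝓝 (Ξ η), Ξ (g y) = y := hfd.eventually_right_inverse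
    have hgd : HasDerivAt g (1 - Φ η / c)⁻¹ (Ξ η) := ((hΞs η).to_localInverse (hne η)).hasDerivAt
    have hφg : φ =ᶠ[𝓝 (Ξ η)] fun y => Φ (g y) := by
      filter_upwards [hright] with y hy
      conv_lhs => rw [← hy]
      exact hφ (g y)
    have hcomp : HasDerivAt (fun y => Φ (g y)) (deriv Φ η * (1 - Φ η / c)⁻¹) (Ξ η) := by
      have hΦd : HasDerivAt Φ (deriv Φ η) (g (Ξ η)) := by rw [hga]; exact (hΦ η).hasDerivAt
      exact hΦd.comp (Ξ η) hgd
    exact hcomp.congr_of_eventuallyEq hφg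
  -- the composite F ∘ Ξ is -c Φ'
  have hF : ∀ η : ℝ, (φ (Ξ η) - c) * deriv φ (Ξ η) = -c * deriv Φ η := by
    intro η
    rw [hφ, (claimA η).deriv]
    have h1 : (1 : ℝ) - Φ η / c = (c - Φ η) / c := by field_simp
    rw [h1]
    field_simp [hcΦ η]
    ring
  -- main computation
  rintro ξ ⟨η, rfl⟩
  set g := (hΞs η).localInverse Ξ _ η (hne η) with hg
  have hfd : HasStrictFDerivAt Ξ
      ((ContinuousLinearEquiv.unitsEquivAut ℝ (Units.mk0 _ (hne η))).toContinuousLinearEquiv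
        : ℝ →L[ℝ] ℝ) η := (hΞs η).hasStrictFDerivAt_equiv (hne η)
  have hga : g (Ξ η) = η := hfd.localInverse_apply_image
  have hright : ∀ᶠ y in 𝓝 (Ξ η), Ξ (g y) = y := hfd.eventually_right_inverse
  have hgd : HasDerivAt g (1 - Φ η / c)⁻¹ (Ξ η) := ((hΞs η).to_localInverse (hne η)).hasDerivAt
  -- F agrees with -c Φ' ∘ g near Ξ η
  have hFeq : (fun s => (φ s - c) * deriv φ s) =ᶠ[𝓝 (Ξ η)]
      fun y => -c * deriv Φ (g y) := by
    filter_upwards [hright] with y hy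
    calc (φ y - c) * deriv φ y = (φ (Ξ (g y)) - c) * deriv φ (Ξ (g y)) := by rw [hy]
    _ = -c * deriv Φ (g y) := hF (g y)
  have hcomp : HasDerivAt (fun y => -c * deriv Φ (g y))
      (-c * (deriv (deriv Φ) η * (1 - Φ η / c)⁻¹)) (Ξ η) := by
    have h1 : HasDerivAt (fun y => deriv Φ (g y)) (deriv (deriv Φ) η * (1 - Φ η / c)⁻¹) (Ξ η) := by
      have hΦd : HasDerivAt (deriv Φ) (deriv (deriv Φ) η) (g (Ξ η)) := by
        rw [hga]; exact (hΦ' η).hasDerivAt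
      exact hΦd.comp (Ξ η) hgd
    simpa using h1.const_mul (-c)
  have hmain : HasDerivAt (fun s => (φ s - c) * deriv φ s)
      (-c * (deriv (deriv Φ) η * (1 - Φ η / c)⁻¹)) (Ξ η) :=
    hcomp.congr_of_eventuallyEq hFeq
  rw [hmain.deriv, hφ]
  have hΦ'' : deriv (deriv Φ) η = Φ η * (Φ η - c) / c ^ 2 := by
    field_simp [pow_ne_zero 2 hc] at hprofile ⊢
    linarith [hprofile η]
  rw [hΦ'']
  have h1 : (1 : ℝ) - Φ η / c = (c - Φ η) / c := by field_simp
  rw [h1]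
  field_simp [hcΦ η]
  ring
end

section
/- Suppose Φ : ℝ → ℝ is twice differentiable and satisfies −c² Φ'' − c Φ + Φ³ = 0 for a constant c ≠ 0. Define Ψ with Ψ' = Φ², Ξ(η) = η − Ψ(η)/c, and assume 1 − Φ(η)²/c > 0 for all η so that Ξ is a diffeomorphism onto its image. Then the function φ defined by φ(Ξ(η)) = Φ(η) satisfies ((φ² − c) φ_ξ)_ξ = φ on the image of Ξ. -/
/-- The change of variables `ξ = Ξ(η) = η - Ψ(η)/c`, `Ψ' = Φ²`, transforms a solution `Φ`
of `-c²Φ'' - cΦ + Φ³ = 0` into a solution `φ` of the short pulse traveling-wave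
equation `((φ² - c)φ_ξ)_ξ = φ` on the image of `Ξ`. -/
theorem stmt4
    (c : ℝ) (hc : c ≠ 0) (Φ Ψ φ : ℝ → ℝ)
    (hΦ : Differentiable ℝ Φ) (hΦ' : Differentiable ℝ (deriv Φ))
    (hprofile : ∀ η : ℝ, -(c ^ 2) * deriv (deriv Φ) η - c * Φ η + (Φ η) ^ 3 = 0)
    (hΨ : Differentiable ℝ Ψ) (hΨ' : ∀ η : ℝ, deriv Ψ η = (Φ η) ^ 2)
    (Ξ : ℝ → ℝ) (hΞ : ∀ η : ℝ, Ξ η = η - Ψ η / c)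
    (hmono : ∀ η : ℝ, 1 - (Φ η) ^ 2 / c > 0)
    (hφ : ∀ η : ℝ, φ (Ξ η) = Φ η) :
    ∀ ξ ∈ Set.range Ξ, deriv (fun s => ((φ s) ^ 2 - c) * deriv φ s) ξ = φ ξ := by
  have hΦc : Continuous Φ := hΦ.continuous
  set D : ℝ → ℝ := fun η => 1 - (Φ η) ^ 2 / c with hDdef
  have hD : ∀ η, D η ≠ 0 := fun η => ne_of_gt (hmono η)
  have hΨc1 : ContDiff ℝ 1 Ψ := by
    rw [contDiff_one_iff_deriv]
    refine ⟨hΨ, ?_⟩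
    have : deriv Ψ = fun η => (Φ η) ^ 2 := funext hΨ'
    rw [this]
    exact hΦc.pow 2
  have hΞeq : Ξ = fun η => η - Ψ η / c := funext hΞ
  have hΞs : ∀ η, HasStrictDerivAt Ξ (D η) η := by
    intro η
    have h1 : HasStrictDerivAt Ψ ((Φ η) ^ 2) η := by
      have h : HasStrictDerivAt Ψ (deriv Ψ η) η := hΨc1.hasStrictDerivAt one_ne_zero
      rwa [hΨ' η] at h
    have h2 : HasStrictDerivAt (fun x : ℝ => x - Ψ x / c) (1 - (Φ η) ^ 2 / c) η :=
      (hasStrictDerivAt_id η).sub (h1.div_const c)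
    rw [hΞeq]
    exact h2
  -- derivative of φ at every point of the range of Ξ
  have key : ∀ η : ℝ, HasDerivAt φ (deriv Φ η / D η) (Ξ η) := by
    intro η
    set g := (hΞs η).localInverse Ξ (D η) η (hD η) with hgdef
    have hg : HasStrictDerivAt g (D η)⁻¹ (Ξ η) := (hΞs η).to_localInverse (hD η)
    have hginv : ∀ᶠ y in nhds (Ξ η), Ξ (g y) = y :=
      ((hΞs η).hasStrictFDerivAt_equiv (hD η)).eventually_right_inverse
    have hgval : g (Ξ η) = η :=
      ((hΞs η).hasStrictFDerivAt_equiv (hD η)).localInverse_apply_image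
    have hphi : φ =ᶠ[nhds (Ξ η)] fun y => Φ (g y) := by
      refine hginv.mono (fun y hy => ?_)
      have h := hφ (g y)
      rw [hy] at h
      exact h
    have hΦg : HasDerivAt (fun y => Φ (g y)) (deriv Φ η * (D η)⁻¹) (Ξ η) := by
      have h1 : HasDerivAt Φ (deriv Φ η) (g (Ξ η)) := by
        rw [hgval]; exact (hΦ η).hasDerivAt
      exact HasDerivAt.comp (Ξ η) h1 hg.hasDerivAt
    have := hΦg.congr_of_eventuallyEq hphi
    rwa [div_eq_mul_inv]
  rintro ξ ⟨η, rfl⟩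
  set g := (hΞs η).localInverse Ξ (D η) η (hD η) with hgdef
  have hg : HasStrictDerivAt g (D η)⁻¹ (Ξ η) := (hΞs η).to_localInverse (hD η)
  have hginv : ∀ᶠ y in nhds (Ξ η), Ξ (g y) = y :=
    ((hΞs η).hasStrictFDerivAt_equiv (hD η)).eventually_right_inverse
  have hgval : g (Ξ η) = η :=
    ((hΞs η).hasStrictFDerivAt_equiv (hD η)).localInverse_apply_image
  have hout : (fun s => ((φ s) ^ 2 - c) * deriv φ s) =ᶠ[nhds (Ξ η)]
      fun y => -c * deriv Φ (g y) := by
    refine hginv.mono (fun y hy => ?_)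
    have h1 : φ y = Φ (g y) := by
      have h := hφ (g y); rwa [hy] at h
    have h2 : deriv φ y = deriv Φ (g y) / D (g y) := by
      have h := (key (g y)).deriv; rwa [hy] at h
    have hDg := hD (g y)
    show ((φ y) ^ 2 - c) * deriv φ y = -c * deriv Φ (g y)
    rw [h1, h2]
    simp only [hDdef] at hDg ⊢
    have h3 : c - Φ (g y) ^ 2 ≠ 0 := by
      intro h; apply hDg; field_simp; linarith
    field_simp
    ring
  rw [hout.deriv_eq]
  have hrhs : HasDerivAt (fun y => -c * deriv Φ (g y))
      (-c * (deriv (deriv Φ) η * (D η)⁻¹)) (Ξ η) := by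
    have h1 : HasDerivAt (deriv Φ) (deriv (deriv Φ) η) (g (Ξ η)) := by
      rw [hgval]; exact (hΦ' η).hasDerivAt
    exact (HasDerivAt.comp (Ξ η) h1 hg.hasDerivAt).const_mul (-c)
  rw [hrhs.deriv, hφ]
  have hp := hprofile η
  have hDη := hD η
  simp only [hDdef] at hDη ⊢
  have ha : deriv (deriv Φ) η = (Φ η ^ 3 - c * Φ η) / c ^ 2 := by
    have h2 : c ^ 2 ≠ 0 := pow_ne_zero 2 hc
    field_simp
    linarith [hp]
  have h3 : c - Φ η ^ 2 ≠ 0 := by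
    intro h; apply hDη; field_simp; linarith
  rw [ha]
  field_simp
  ring
end

section
/- Let f(x) = e^{−x}·sech(x)·tanh(x). Then f solves −f''(x) − 6·sech²(x)·f(x) = 2 f'(x) on ℝ, and lim_{x→−∞} f(x) = −2 while lim_{x→+∞} f(x) = 0. -/
open Filter

private lemma hasDeriv_u (x : ℝ) :
    HasDerivAt (fun x : ℝ => Real.exp (2*x)) (2 * Real.exp (2*x)) x := by
  have h1 : HasDerivAt (fun x : ℝ => 2*x) 2 x := by simpa using (hasDerivAt_id x).const_mul 2
  have := (Real.hasDerivAt_exp (2*x)).comp x h1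
  simpa [Function.comp_def, mul_comm] using this

private lemma hasDeriv_F (x : ℝ) :
    HasDerivAt (fun x : ℝ => 2*(Real.exp (2*x)-1)/(Real.exp (2*x)+1)^2)
      (4*Real.exp (2*x)*(3-Real.exp (2*x))/(Real.exp (2*x)+1)^3) x := by
  have he := hasDeriv_u x
  have hnum := (he.sub_const 1).const_mul 2
  have hden := (he.add_const 1).pow 2
  have hne : Real.exp (2*x) + 1 ≠ 0 := by positivity
  have h := hnum.div hden (pow_ne_zero _ hne)
  refine h.congr_deriv ?_
  simp only [Pi.pow_apply, Pi.mul_apply]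
  rw [div_eq_div_iff (by positivity) (by positivity)]
  ring

private lemma hasDeriv_G (x : ℝ) :
    HasDerivAt (fun x : ℝ => 4*Real.exp (2*x)*(3-Real.exp (2*x))/(Real.exp (2*x)+1)^3)
      ((8*(Real.exp (2*x))^3 - 64*(Real.exp (2*x))^2 + 24*Real.exp (2*x))
        / (Real.exp (2*x)+1)^4) x := by
  have he := hasDeriv_u x
  have hnum := ((he.const_mul 4).mul (he.const_sub 3))
  have hden := (he.add_const 1).pow 3
  have hne : Real.exp (2*x) + 1 ≠ 0 := by positivity
  have h := hnum.div hden (pow_ne_zero _ hne)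
  refine h.congr_deriv ?_
  simp only [Pi.pow_apply, Pi.mul_apply]
  rw [div_eq_div_iff (by positivity) (by positivity)]
  ring

/-- `f(x) = e^(-x)·sech(x)·tanh(x)` solves `-f'' - 6 sech² f = 2f'` on `ℝ`,
with `f → -2` as `x → -∞` and `f → 0` as `x → +∞`. -/
theorem stmt11
    (f : ℝ → ℝ)
    (hf : ∀ x : ℝ, f x = Real.exp (-x) * (1 / Real.cosh x) * Real.tanh x) :
    (∀ x : ℝ, -(deriv (deriv f) x) - 6 * (1 / Real.cosh x) ^ 2 * f x = 2 * deriv f x) ∧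
      Tendsto f atBot (nhds (-2)) ∧ Tendsto f atTop (nhds 0) := by
  have hfx : ∀ x : ℝ, f x = 2*(Real.exp (2*x)-1)/(Real.exp (2*x)+1)^2 := by
    intro x
    rw [hf, Real.tanh_eq_sinh_div_cosh, Real.sinh_eq, Real.cosh_eq, Real.exp_neg]
    have he : Real.exp (2*x) = Real.exp x * Real.exp x := by rw [two_mul, Real.exp_add]
    have h1 : Real.exp x ≠ 0 := Real.exp_ne_zero x
    have h2 : Real.exp x + (Real.exp x)⁻¹ ≠ 0 := by positivity
    rw [he]
    have h3 : Real.exp x * Real.exp x + 1 ≠ 0 := by positivity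
    field_simp
  have hfeq : f = fun x => 2*(Real.exp (2*x)-1)/(Real.exp (2*x)+1)^2 := funext hfx
  have hdf : deriv f = fun x => 4*Real.exp (2*x)*(3-Real.exp (2*x))/(Real.exp (2*x)+1)^3 := by
    funext x
    rw [hfeq]
    exact (hasDeriv_F x).deriv
  have hddf : ∀ x : ℝ, deriv (deriv f) x
      = (8*(Real.exp (2*x))^3 - 64*(Real.exp (2*x))^2 + 24*Real.exp (2*x))
        / (Real.exp (2*x)+1)^4 := by
    intro x
    rw [hdf]
    exact (hasDeriv_G x).deriv
  have hsech : ∀ x : ℝ, (1 / Real.cosh x) ^ 2 = 4*Real.exp (2*x)/(Real.exp (2*x)+1)^2 := by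
    intro x
    rw [Real.cosh_eq, Real.exp_neg]
    have he : Real.exp (2*x) = Real.exp x * Real.exp x := by rw [two_mul, Real.exp_add]
    have h1 : Real.exp x ≠ 0 := Real.exp_ne_zero x
    have h2 : Real.exp x + (Real.exp x)⁻¹ ≠ 0 := by positivity
    rw [he]
    have h3 : Real.exp x * Real.exp x + 1 ≠ 0 := by positivity
    field_simp
    ring
  refine ⟨?_, ?_, ?_⟩
  · intro x
    rw [hddf x, hsech x, hfx x, hdf]
    have hne : Real.exp (2*x) + 1 ≠ 0 := by positivity
    field_simp
    ring
  · rw [hfeq]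
    have h2x : Tendsto (fun x : ℝ => 2*x) atBot atBot :=
      (tendsto_id (α := ℝ)).const_mul_atBot two_pos
    have hexp : Tendsto (fun x : ℝ => Real.exp (2*x)) atBot (nhds 0) :=
      Real.tendsto_exp_atBot.comp h2x
    have hcont : ContinuousAt (fun u : ℝ => 2*(u-1)/(u+1)^2) 0 := by
      apply ContinuousAt.div
      · fun_prop
      · fun_prop
      · norm_num
    have := hcont.tendsto.comp hexp
    simpa [Function.comp_def] using this
  · rw [hfeq]
    have h2x : Tendsto (fun x : ℝ => 2*x) atTop atTop :=
      (tendsto_id (α := ℝ)).const_mul_atTop two_pos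
    have hexp : Tendsto (fun x : ℝ => Real.exp (2*x)) atTop atTop :=
      Real.tendsto_exp_atTop.comp h2x
    have e1 : Tendsto (fun u : ℝ => u+1) atTop atTop :=
      tendsto_atTop_add_const_right _ 1 tendsto_id
    have e2 : Tendsto (fun u : ℝ => 2/(u+1)) atTop (nhds 0) := by
      have := (tendsto_inv_atTop_zero.comp e1).const_mul (2 : ℝ)
      simpa [div_eq_mul_inv, Function.comp] using this
    have e3 : Tendsto (fun u : ℝ => 4/(u+1)^2) atTop (nhds 0) := by
      have hsq : Tendsto (fun u : ℝ => (u+1)^2) atTop atTop := by simpa [Function.comp_def] using (tendsto_pow_atTop (two_ne_zero)).comp e1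
      have := (tendsto_inv_atTop_zero.comp hsq).const_mul (4 : ℝ)
      simpa [div_eq_mul_inv, Function.comp] using this
    have hlim : Tendsto (fun u : ℝ => 2*(u-1)/(u+1)^2) atTop (nhds 0) := by
      have heq : ∀ᶠ u in (atTop : Filter ℝ), 2/(u+1) - 4/(u+1)^2 = 2*(u-1)/(u+1)^2 := by
        filter_upwards [eventually_gt_atTop (0:ℝ)] with u hu
        have : u + 1 ≠ 0 := by linarith
        field_simp
        ring
      have := (e2.sub e3)
      simpa using this.congr' heq
    exact hlim.comp hexp
end

section
/- Let L be a symmetric operator on an inner product space of real-valued functions that maps even functions to even functions and odd functions to odd functions. Suppose μ₁, μ₂ ∈ ℝ with μ₁ ≠ 0, μ₂ ≠ 0, and real functions u₁, v₁ (even) and u₂, v₂ (odd) satisfy: L u₁ = μ₁ u₂' − μ₂ v₂', L u₂ = μ₁ u₁' − μ₂ v₁', L v₁ = μ₂ u₂' + μ₁ v₂', L v₂ = μ₂ u₁' + μ₁ v₁', where ' is a skew-symmetric derivative operator. Then ⟨u₂', v₁⟩ = ⟨v₂', u₁⟩ and ⟨v₁', v₂⟩ = ⟨u₂', u₁⟩,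 and consequently ⟨L u₁, u₁⟩ + ⟨L v₁, v₁⟩ = 0. -/
open scoped RealInnerProductSpace

/-- Key algebraic step ruling out complex instabilities: with `L` symmetric commuting
with the parity involution `R`, `D` a skew-symmetric derivative anticommuting with `R`,
even functions `u₁, v₁` and odd functions `u₂, v₂` satisfying the linearized system,
one gets `⟪D u₂, v₁⟫ = ⟪D v₂, u₁⟫`, `⟪D v₁, v₂⟫ = ⟪D u₂, u₁⟫`, and consequently
`⟪L u₁, u₁⟫ + ⟪L v₁, v₁⟫ = 0`. -/
theorem stmt13
    {X : Type*} [NormedAddCommGroup X] [InnerProductSpace ℝ X]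
    (L D R : X →ₗ[ℝ] X)
    (hL : ∀ x y : X, ⟪L x, y⟫ = ⟪x, L y⟫)
    (hD : ∀ x y : X, ⟪D x, y⟫ = -⟪x, D y⟫)
    (hLR : ∀ x : X, L (R x) = R (L x))
    (hDR : ∀ x : X, D (R x) = -R (D x))
    (μ₁ μ₂ : ℝ) (hμ₁ : μ₁ ≠ 0) (hμ₂ : μ₂ ≠ 0)
    (u₁ v₁ u₂ v₂ : X)
    (heu₁ : R u₁ = u₁) (hev₁ : R v₁ = v₁) (hou₂ : R u₂ = -u₂) (hov₂ : R v₂ = -v₂)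
    (h1 : L u₁ = μ₁ • D u₂ - μ₂ • D v₂)
    (h2 : L u₂ = μ₁ • D u₁ - μ₂ • D v₁)
    (h3 : L v₁ = μ₂ • D u₂ + μ₁ • D v₂)
    (h4 : L v₂ = μ₂ • D u₁ + μ₁ • D v₁) :
    ⟪D u₂, v₁⟫ = ⟪D v₂, u₁⟫ ∧ ⟪D v₁, v₂⟫ = ⟪D u₂, u₁⟫ ∧
      ⟪L u₁, u₁⟫ + ⟪L v₁, v₁⟫ = 0 := by
  have comm : ∀ x y : X, (⟪x, y⟫ : ℝ) = ⟪y, x⟫ := fun x y => real_inner_comm y x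
  -- first symmetry equation: ⟪L u₁, v₁⟫ = ⟪u₁, L v₁⟫
  have e1 : μ₁ * ⟪D u₂, v₁⟫ - μ₂ * ⟪D v₂, v₁⟫
      = μ₂ * ⟪D u₂, u₁⟫ + μ₁ * ⟪D v₂, u₁⟫ := by
    have h := hL u₁ v₁
    rw [h1, h3, inner_sub_left, inner_add_right, real_inner_smul_left,
      real_inner_smul_left, real_inner_smul_right, real_inner_smul_right,
      comm u₁ (D u₂), comm u₁ (D v₂)] at h
    exact h
  -- second symmetry equation: ⟪L u₂, v₂⟫ = ⟪u₂, L v₂⟫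
  have e2 : μ₁ * (-⟪D v₂, u₁⟫) - μ₂ * (-⟪D v₂, v₁⟫)
      = μ₂ * (-⟪D u₂, u₁⟫) + μ₁ * (-⟪D u₂, v₁⟫) := by
    have h := hL u₂ v₂
    rw [h2, h4, inner_sub_left, inner_add_right, real_inner_smul_left,
      real_inner_smul_left, real_inner_smul_right, real_inner_smul_right] at h
    have r1 : (⟪D u₁, v₂⟫ : ℝ) = -⟪D v₂, u₁⟫ := by
      rw [hD u₁ v₂, comm u₁ (D v₂)]
    have r2 : (⟪D v₁, v₂⟫ : ℝ) = -⟪D v₂, v₁⟫ := by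
      rw [hD v₁ v₂, comm v₁ (D v₂)]
    have r3 : (⟪u₂, D u₁⟫ : ℝ) = -⟪D u₂, u₁⟫ := by
      rw [comm u₂ (D u₁), hD u₁ u₂, comm u₁ (D u₂)]
    have r4 : (⟪u₂, D v₁⟫ : ℝ) = -⟪D u₂, v₁⟫ := by
      rw [comm u₂ (D v₁), hD v₁ u₂, comm v₁ (D u₂)]
    rw [r1, r2, r3, r4] at h
    exact h
  have hCB : (⟪D u₂, v₁⟫ : ℝ) = ⟪D v₂, u₁⟫ := by
    have h0 : μ₁ * ((⟪D u₂, v₁⟫ : ℝ) - ⟪D v₂, u₁⟫) = 0 := by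
      linear_combination (1/2 : ℝ) * e1 + (1/2 : ℝ) * e2
    rcases mul_eq_zero.mp h0 with h' | h'
    · exact absurd h' hμ₁
    · linarith
  have hAE : (⟪D u₂, u₁⟫ : ℝ) = -⟪D v₂, v₁⟫ := by
    have h0 : μ₂ * ((⟪D u₂, u₁⟫ : ℝ) + ⟪D v₂, v₁⟫) = 0 := by
      linear_combination (1/2 : ℝ) * e2 - (1/2 : ℝ) * e1
    rcases mul_eq_zero.mp h0 with h' | h'
    · exact absurd h' hμ₂
    · linarith
  refine ⟨hCB, ?_, ?_⟩
  · rw [hD v₁ v₂, comm v₁ (D v₂)]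
    linear_combination -hAE
  · rw [h1, h3, inner_sub_left, inner_add_left, real_inner_smul_left,
      real_inner_smul_left, real_inner_smul_left, real_inner_smul_left]
    linear_combination μ₁ * hAE + μ₂ * hCB
end

section
/- Let H be a self-adjoint operator on a Hilbert space X with exactly k negative eigenvalues (k ≥ 1), with negative spectral subspace Z₀ = span{η₁, …, η_k}, and suppose H ≥ δ₀ on the orthogonal complement of span{Z₀, Ker H} for some δ₀ > 0. Let Z be a subspace with dim Z ≥ k, Z ⊥ Ker H, and ⟨H⁻¹ z, z⟩ ≤ −δ₀‖z‖² for all z ∈ Z. Then ⟨H w, w⟩ ≥ 0 for all w ∈ D(H) with w ⊥ Z. -/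
open scoped RealInnerProductSpace

/-- Positivity of a self-adjoint operator with `k` negative eigenvalues on the
orthogonal complement of a subspace `Z` of dimension at least `k`, perpendicular to
the kernel, on which `H⁻¹ ≤ -δ₀`. -/
theorem stmt17
    {X : Type*} [NormedAddCommGroup X] [InnerProductSpace ℝ X] [CompleteSpace X]
    (H : X →ₗ[ℝ] X) (hsym : ∀ x y : X, ⟪H x, y⟫ = ⟪x, H y⟫)
    (k : ℕ) (hk : 1 ≤ k) (η : Fin k → X) (honb : Orthonormal ℝ η)
    (σ : Fin k → ℝ) (hσ : ∀ i, 0 < σ i)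
    (heig : ∀ i, H (η i) = -((σ i) ^ 2) • η i)
    (hpos : ∀ z : X, (∀ i, ⟪z, η i⟫ = 0) → 0 ≤ ⟪H z, z⟫)
    (δ₀ : ℝ) (hδ₀ : 0 < δ₀)
    (hgap : ∀ z : X, (∀ i, ⟪z, η i⟫ = 0) → (∀ w : X, H w = 0 → ⟪z, w⟫ = 0) →
      δ₀ * ‖z‖ ^ 2 ≤ ⟪H z, z⟫)
    (Z : Submodule ℝ X) (hdim : (k : Cardinal) ≤ Module.rank ℝ Z)
    (hZker : ∀ z ∈ Z, ∀ w : X, H w = 0 → ⟪z, w⟫ = 0)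
    (hinv : ∀ z ∈ Z, ∀ w : X, H w = z → ⟪w, z⟫ ≤ -δ₀ * ‖z‖ ^ 2)
    (hsol : ∀ z ∈ Z, ∃ w : X, H w = z) :
    ∀ w : X, (∀ z ∈ Z, ⟪w, z⟫ = 0) → 0 ≤ ⟪H w, w⟫ := by
  classical
  -- the component map
  set φ : Z →ₗ[ℝ] (Fin k → ℝ) :=
    { toFun := fun z => fun i => ⟪(z : X), η i⟫
      map_add' := by intro a b; funext i; simp [inner_add_left]
      map_smul' := by intro c a; funext i; simp [real_inner_smul_left] } with hφ
  -- eigen-component relation: for H u = z, ⟪u, η i⟫ = -(σ i)⁻² ⟪z, η i⟫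
  have hcomp : ∀ (u z : X), H u = z → ∀ i, ⟪z, η i⟫ = -((σ i) ^ 2) * ⟪u, η i⟫ := by
    intro u z hu i
    have : ⟪H u, η i⟫ = ⟪u, H (η i)⟫ := hsym u (η i)
    rw [hu, heig i] at this
    rw [this, real_inner_smul_right]
  -- φ is injective
  have hinj : Function.Injective φ := by
    rw [injective_iff_map_eq_zero]
    intro z hz
    have hz' : ∀ i, ⟪(z : X), η i⟫ = 0 := fun i => congrFun hz i
    obtain ⟨u, hu⟩ := hsol z z.2
    have hu' : ∀ i, ⟪u, η i⟫ = 0 := by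
      intro i
      have h1 := hcomp u z hu i
      have h2 := hz' i
      have hσi : (σ i) ^ 2 ≠ 0 := pow_ne_zero _ (ne_of_gt (hσ i))
      rw [h2] at h1
      rcases mul_eq_zero.mp h1.symm with h | h
      · exact absurd (neg_eq_zero.mp h) hσi
      · exact h
    have h3 : 0 ≤ ⟪H u, u⟫ := hpos u hu'
    have h4 : ⟪u, (z : X)⟫ ≤ -δ₀ * ‖(z : X)‖ ^ 2 := hinv z z.2 u hu
    rw [hu, real_inner_comm] at h3
    have h5 : ‖(z : X)‖ ^ 2 ≤ 0 := by nlinarith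
    have h6 : (z : X) = 0 := by
      have := norm_nonneg (z : X)
      have : ‖(z : X)‖ = 0 := by nlinarith
      exact norm_eq_zero.mp this
    exact Subtype.ext h6
  -- finite dimensionality and surjectivity
  have : FiniteDimensional ℝ Z := FiniteDimensional.of_injective φ hinj
  have hle : Module.finrank ℝ Z ≤ k := by
    have := LinearMap.finrank_le_finrank_of_injective hinj
    simpa using this
  have hge : (k : ℕ) ≤ Module.finrank ℝ Z := by
    have := hdim
    rw [← Module.finrank_eq_rank ℝ Z] at this
    exact_mod_cast this
  have hfr : Module.finrank ℝ Z = k := le_antisymm hle hge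
  have hsurj : Function.Surjective φ := by
    have heq : Module.finrank ℝ Z = Module.finrank ℝ (Fin k → ℝ) := by
      simp [hfr]
    exact (LinearMap.injective_iff_surjective_of_finrank_eq_finrank heq).mp hinj
  -- main argument
  intro w hw
  obtain ⟨z, hz⟩ := hsurj (fun i => -((σ i) ^ 2) * ⟪w, η i⟫)
  have hzc : ∀ i, ⟪(z : X), η i⟫ = -((σ i) ^ 2) * ⟪w, η i⟫ := fun i => congrFun hz i
  obtain ⟨u, hu⟩ := hsol z z.2
  have huc : ∀ i, ⟪u, η i⟫ = ⟪w, η i⟫ := by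
    intro i
    have h1 := hcomp u z hu i
    rw [hzc i] at h1
    have hσi : (σ i) ^ 2 ≠ 0 := pow_ne_zero _ (ne_of_gt (hσ i))
    have : -((σ i) ^ 2) ≠ 0 := by simpa using hσi
    exact (mul_left_cancel₀ this h1).symm
  have hperp : ∀ i, ⟪w - u, η i⟫ = 0 := by
    intro i
    rw [inner_sub_left, huc i]
    ring
  have hpos' := hpos (w - u) hperp
  have hwz : ⟪w, (z : X)⟫ = 0 := hw z z.2
  have hHu : ⟪H u, u⟫ ≤ -δ₀ * ‖(z : X)‖ ^ 2 := by
    rw [hu, real_inner_comm]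
    exact hinv z z.2 u hu
  have hmix : ⟪H w, u⟫ = 0 := by
    rw [hsym, hu]; exact hwz
  have hmix' : ⟪H u, w⟫ = 0 := by
    rw [hu, real_inner_comm]; exact hwz
  have hexp : ⟪H (w - u), w - u⟫ = ⟪H w, w⟫ - ⟪H w, u⟫ - ⟪H u, w⟫ + ⟪H u, u⟫ := by
    rw [map_sub, inner_sub_left, inner_sub_right, inner_sub_right]
    ring
  rw [hexp, hmix, hmix'] at hpos'
  nlinarith [sq_nonneg ‖(z : X)‖]
end
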